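/- Let n ≥ 2 be an integer, k1, k2 > 0, and k31 = k32 ≥ 0. If u ∈ ℝ^{2n} and μ ∈ ℝ satisfy Lu = μu, then the reversed vector u′ defined by u′_j = u_{2n+1−j} (1 ≤ j ≤ 2n) also satisfies Lu′ = μu′. Moreover, if u ≠ 0 then there exists a real constant c ≠ 0 such that u = c·u′. -/

import Mathlib

/-- The stiffness matrix `L` of the diatomic chain with alternating spring constants
`k1, k2` and boundary spring constants `k31, k32` (0-based indexing of `Fin (2*n)`). -/
def stiffL (n : ℕ) (k1 k2 k31 k32 : ℝ) : Matrix (Fin (2*n)) (Fin (2*n)) ℝ :=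
  Matrix.of fun i j =>
    if (i : ℕ) = (j : ℕ) then
      (if (i : ℕ) = 0 then -(k31 + k1)
       else if (i : ℕ) = 2*n - 1 then -(k1 + k32)
       else -(k1 + k2))
    else if (i : ℕ) + 1 = (j : ℕ) then (if (i : ℕ) % 2 = 0 then k1 else k2)
    else if (j : ℕ) + 1 = (i : ℕ) then (if (j : ℕ) % 2 = 0 then k1 else k2)
    else 0

lemma stiff_symm (n : ℕ) (k1 k2 k3 : ℝ) (i j : Fin (2*n)) :
    stiffL n k1 k2 k3 k3 i.rev j.rev = stiffL n k1 k2 k3 k3 i j := by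
  have hi := i.isLt; have hj := j.isLt
  simp only [stiffL, Matrix.of_apply, Fin.val_rev]
  split_ifs <;> first | rfl | ring1 | omega

lemma rev_eigen (n : ℕ) (k1 k2 k3 : ℝ) (u : Fin (2*n) → ℝ) (μ : ℝ)
    (hu : (stiffL n k1 k2 k3 k3).mulVec u = μ • u) :
    (stiffL n k1 k2 k3 k3).mulVec (fun i => u i.rev) = μ • (fun i => u i.rev) := by
  funext i
  have h1 : ((stiffL n k1 k2 k3 k3).mulVec (fun j => u j.rev)) i
      = ((stiffL n k1 k2 k3 k3).mulVec u) i.rev := by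
    simp only [Matrix.mulVec, dotProduct]
    calc ∑ j : Fin (2*n), stiffL n k1 k2 k3 k3 i j * u j.rev
        = ∑ j : Fin (2*n), stiffL n k1 k2 k3 k3 i.rev j.rev * u j.rev := by
          refine Finset.sum_congr rfl fun j _ => ?_
          rw [show stiffL n k1 k2 k3 k3 i j = stiffL n k1 k2 k3 k3 i.rev j.rev from
            (stiff_symm n k1 k2 k3 i j).symm]
      _ = ∑ j : Fin (2*n), stiffL n k1 k2 k3 k3 i.rev j * u j := by
          exact Equiv.sum_comp Fin.revPerm (fun j => stiffL n k1 k2 k3 k3 i.rev j * u j)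
  rw [h1, hu]
  simp
lemma sum_two {N : ℕ} (f : Fin N → ℝ) (a b : Fin N) (hab : a ≠ b)
    (hf : ∀ j, j ≠ a → j ≠ b → f j = 0) : ∑ j, f j = f a + f b := by
  have : ∑ j, f j = ∑ j ∈ ({a, b} : Finset (Fin N)), f j := by
    refine (Finset.sum_subset (Finset.subset_univ _) ?_).symm
    intro x _ hx
    simp only [Finset.mem_insert, Finset.mem_singleton, not_or] at hx
    exact hf x hx.1 hx.2
  rw [this, Finset.sum_insert (by simp [hab]), Finset.sum_singleton]

lemma sum_three {N : ℕ} (f : Fin N → ℝ) (a b c : Fin N) (hab : a ≠ b) (hbc : b ≠ c) (hac : a ≠ c)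
    (hf : ∀ j, j ≠ a → j ≠ b → j ≠ c → f j = 0) : ∑ j, f j = f a + f b + f c := by
  have : ∑ j, f j = ∑ j ∈ ({a, b, c} : Finset (Fin N)), f j := by
    refine (Finset.sum_subset (Finset.subset_univ _) ?_).symm
    intro x _ hx
    simp only [Finset.mem_insert, Finset.mem_singleton, not_or] at hx
    exact hf x hx.1 hx.2.1 hx.2.2
  rw [this, Finset.sum_insert (by simp [hab, hac]), Finset.sum_insert (by simp [hbc]),
    Finset.sum_singleton, add_assoc]


lemma stiff_row (n : ℕ) (k1 k2 k3 : ℝ) (v : Fin (2*n) → ℝ) (i : Fin (2*n)) :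
    (stiffL n k1 k2 k3 k3).mulVec v i =
      (if h : 0 < (i:ℕ) then (if ((i:ℕ)-1) % 2 = 0 then k1 else k2) * v ⟨(i:ℕ)-1, by omega⟩ else 0)
    + (if (i:ℕ) = 0 then -(k3+k1) else if (i:ℕ) = 2*n-1 then -(k1+k3) else -(k1+k2)) * v i
    + (if h : (i:ℕ)+1 < 2*n then (if (i:ℕ) % 2 = 0 then k1 else k2) * v ⟨(i:ℕ)+1, h⟩ else 0) := by
  have hi := i.isLt
  have hn1 : 1 ≤ n := by omega
  simp only [Matrix.mulVec, dotProduct]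
  by_cases hz : (i:ℕ) = 0
  · rw [dif_neg (by omega), dif_pos (by omega : (i:ℕ)+1 < 2*n), if_pos hz,
      sum_two (fun j => stiffL n k1 k2 k3 k3 i j * v j) i ⟨(i:ℕ)+1, by omega⟩
        (Fin.ne_of_val_ne (show (i:ℕ) ≠ (i:ℕ)+1 by omega)) ?_]
    · have e1 : stiffL n k1 k2 k3 k3 i i = -(k3+k1) := by
        simp only [stiffL, Matrix.of_apply, Fin.val_mk]
        split_ifs <;> first | rfl | omega
      have e2 : stiffL n k1 k2 k3 k3 i ⟨(i:ℕ)+1, by omega⟩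
          = (if (i:ℕ) % 2 = 0 then k1 else k2) := by
        simp only [stiffL, Matrix.of_apply, Fin.val_mk]
        split_ifs <;> first | rfl | omega
      simp only [e1, e2]
      try ring
    · intro j hj1 hj2
      have hj := j.isLt
      rw [ne_eq, Fin.ext_iff] at hj1 hj2
      simp only [Fin.val_mk] at hj1 hj2
      simp only [stiffL, Matrix.of_apply]
      split_ifs <;> first | ring1 | omega
  · by_cases hl : (i:ℕ) = 2*n - 1
    · rw [dif_pos (by omega : 0 < (i:ℕ)), dif_neg (by omega), if_neg hz, if_pos hl,
        sum_two (fun j => stiffL n k1 k2 k3 k3 i j * v j) ⟨(i:ℕ)-1, by omega⟩ i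
          (Fin.ne_of_val_ne (show (i:ℕ)-1 ≠ (i:ℕ) by omega)) ?_]
      · have e1 : stiffL n k1 k2 k3 k3 i i = -(k1+k3) := by
          simp only [stiffL, Matrix.of_apply, Fin.val_mk]
          split_ifs <;> first | rfl | omega
        have e2 : stiffL n k1 k2 k3 k3 i ⟨(i:ℕ)-1, by omega⟩
            = (if ((i:ℕ)-1) % 2 = 0 then k1 else k2) := by
          simp only [stiffL, Matrix.of_apply, Fin.val_mk]
          split_ifs <;> first | rfl | omega
        simp only [e1, e2]
        try ring
      · intro j hj1 hj2
        have hj := j.isLt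
        rw [ne_eq, Fin.ext_iff] at hj1 hj2
        simp only [Fin.val_mk] at hj1 hj2
        simp only [stiffL, Matrix.of_apply]
        split_ifs <;> first | ring1 | omega
    · rw [dif_pos (by omega : 0 < (i:ℕ)), dif_pos (by omega : (i:ℕ)+1 < 2*n), if_neg hz, if_neg hl,
        sum_three (fun j => stiffL n k1 k2 k3 k3 i j * v j)
          ⟨(i:ℕ)-1, by omega⟩ i ⟨(i:ℕ)+1, by omega⟩
          (Fin.ne_of_val_ne (show (i:ℕ)-1 ≠ (i:ℕ) by omega))
          (Fin.ne_of_val_ne (show (i:ℕ) ≠ (i:ℕ)+1 by omega))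
          (Fin.ne_of_val_ne (show (i:ℕ)-1 ≠ (i:ℕ)+1 by omega)) ?_]
      · have e1 : stiffL n k1 k2 k3 k3 i i = -(k1+k2) := by
          simp only [stiffL, Matrix.of_apply, Fin.val_mk]
          split_ifs <;> first | rfl | omega
        have e2 : stiffL n k1 k2 k3 k3 i ⟨(i:ℕ)-1, by omega⟩
            = (if ((i:ℕ)-1) % 2 = 0 then k1 else k2) := by
          simp only [stiffL, Matrix.of_apply, Fin.val_mk]
          split_ifs <;> first | rfl | omega
        have e3 : stiffL n k1 k2 k3 k3 i ⟨(i:ℕ)+1, by omega⟩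
            = (if (i:ℕ) % 2 = 0 then k1 else k2) := by
          simp only [stiffL, Matrix.of_apply, Fin.val_mk]
          split_ifs <;> first | rfl | omega
        simp only [e1, e2, e3]
        try ring
      · intro j hj1 hj2 hj3
        have hj := j.isLt
        rw [ne_eq, Fin.ext_iff] at hj1 hj2 hj3
        simp only [Fin.val_mk] at hj1 hj2 hj3
        simp only [stiffL, Matrix.of_apply]
        split_ifs <;> first | ring1 | omega


lemma eigen_zero (n : ℕ) (hn : 2 ≤ n) (k1 k2 k3 : ℝ) (hk1 : 0 < k1) (hk2 : 0 < k2)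
    (v : Fin (2*n) → ℝ) (μ : ℝ) (hv : (stiffL n k1 k2 k3 k3).mulVec v = μ • v)
    (h0 : v ⟨0, by omega⟩ = 0) : v = 0 := by
  have key : ∀ m : ℕ, ∀ i : Fin (2*n), (i:ℕ) = m → v i = 0 := by
    intro m
    induction m using Nat.strong_induction_on with
    | _ m ih =>
      rcases m with _ | m
      · intro i him
        rw [show i = ⟨0, by omega⟩ from Fin.ext him]
        exact h0
      · rcases m with _ | t
        · -- m = 1
          intro i him
          have e := congrFun hv (⟨0, by omega⟩ : Fin (2*n))
          rw [stiff_row] at e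
          have c1 : ((⟨0, by omega⟩ : Fin (2*n)) : ℕ) = 0 := rfl
          simp only [c1, Pi.smul_apply, smul_eq_mul] at e
          rw [dif_neg (show ¬(0:ℕ) < 0 by omega), dif_pos (show (0:ℕ)+1 < 2*n by omega),
            h0] at e
          simp only [if_true, mul_zero, zero_add, add_zero] at e
          rw [show i = ⟨1, by omega⟩ from Fin.ext him]
          rcases mul_eq_zero.1 e with h | h
          · exact absurd h (ne_of_gt hk1)
          · exact h
        · -- m = t + 2
          intro i him
          have hm2 : t + 2 < 2*n := by have := i.isLt; omega
          have e := congrFun hv (⟨t+1, by omega⟩ : Fin (2*n))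
          rw [stiff_row] at e
          have c1 : ((⟨t+1, by omega⟩ : Fin (2*n)) : ℕ) = t+1 := rfl
          simp only [c1, Pi.smul_apply, smul_eq_mul] at e
          rw [dif_pos (show 0 < t+1 by omega), if_neg (show ¬(t+1 = 0) by omega),
            if_neg (show ¬(t+1 = 2*n-1) by omega), dif_pos (show t+1+1 < 2*n by omega)] at e
          have hprev : v ⟨t+1-1, by omega⟩ = 0 := ih t (by omega) _ rfl
          have hcur : v ⟨t+1, by omega⟩ = 0 := ih (t+1) (by omega) _ rfl
          rw [hprev, hcur] at e
          simp only [mul_zero, zero_add, add_zero] at e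
          rw [show i = ⟨t+1+1, by omega⟩ from Fin.ext him]
          rcases mul_eq_zero.1 e with h | h
          · split_ifs at h
            · exact absurd h (ne_of_gt hk1)
            · exact absurd h (ne_of_gt hk2)
          · exact h
  funext i
  exact key (i:ℕ) i rfl

/-- If `k31 = k32`, eigenvectors of the stiffness matrix are (up to a nonzero scalar)
equal to their own spatial reversal. -/
theorem stmt1 (n : ℕ) (hn : 2 ≤ n) (k1 k2 k3 : ℝ)
    (hk1 : 0 < k1) (hk2 : 0 < k2) (hk3 : 0 ≤ k3)
    (u : Fin (2*n) → ℝ) (μ : ℝ)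
    (hu : (stiffL n k1 k2 k3 k3).mulVec u = μ • u) :
    (stiffL n k1 k2 k3 k3).mulVec (fun i => u i.rev) = μ • (fun i => u i.rev) ∧
    (u ≠ 0 → ∃ c : ℝ, c ≠ 0 ∧ u = c • (fun i => u i.rev)) := by
  have hrev := rev_eigen n k1 k2 k3 u μ hu
  refine ⟨hrev, fun hne => ?_⟩
  have h2n : 0 < 2*n := by omega
  have hu0 : u ⟨0, h2n⟩ ≠ 0 := fun h => hne (eigen_zero n hn k1 k2 k3 hk1 hk2 u μ hu h)
  have hu'0 : u (Fin.rev ⟨0, h2n⟩) ≠ 0 := by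
    intro h
    have hz : (fun i : Fin (2*n) => u i.rev) = 0 :=
      eigen_zero n hn k1 k2 k3 hk1 hk2 _ μ hrev h
    apply hne
    funext j
    have := congrFun hz j.rev
    simpa [Fin.rev_rev] using this
  refine ⟨u ⟨0, h2n⟩ / u (Fin.rev ⟨0, h2n⟩), div_ne_zero hu0 hu'0, ?_⟩
  have hw : (stiffL n k1 k2 k3 k3).mulVec
        (u - (u ⟨0, h2n⟩ / u (Fin.rev ⟨0, h2n⟩)) • fun i : Fin (2*n) => u i.rev)
      = μ • (u - (u ⟨0, h2n⟩ / u (Fin.rev ⟨0, h2n⟩)) • fun i : Fin (2*n) => u i.rev) := by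
    rw [Matrix.mulVec_sub, Matrix.mulVec_smul, hu, hrev]
    funext j
    simp only [Pi.sub_apply, Pi.smul_apply, smul_eq_mul]
    ring
  have hw0 : (u - (u ⟨0, h2n⟩ / u (Fin.rev ⟨0, h2n⟩)) • fun i : Fin (2*n) => u i.rev) ⟨0, h2n⟩ = 0 := by
    simp only [Pi.sub_apply, Pi.smul_apply, smul_eq_mul]
    field_simp
    simp
  have hzero := eigen_zero n hn k1 k2 k3 hk1 hk2 _ μ hw hw0
  exact sub_eq_zero.1 hzero
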